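/- Let R be a commutative noetherian ring, X a finitely generated reflexive R-module with Ext^1_R(X, R) = 0 which fits in a short exact sequence 0 → X* → P → X → 0 with P finitely generated free, and Y any finitely generated reflexive R-module, where (−)* denotes Hom_R(−, R). Then Ext^1_R(X, Y) is isomorphic as an R-module to the quotient of Hom_R(Y*, X) by the R-submodule consisting of those homomorphisms that factor through some projective R-module. -/

import Mathlib

open CategoryTheory

universe u

/-- `ModuleExt1 R M N` is the `R`-module `Ext¹_R(M, N)`. -/
noncomputable def ModuleExt1 (R : Type u) [CommRing R]
    (M N : Type u) [AddCommGroup M] [Module R M] [AddCommGroup N] [Module R N] :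
    ModuleCat.{u} R :=
  ((Ext R (ModuleCat.{u} R) 1).obj (Opposite.op (ModuleCat.of R M))).obj (ModuleCat.of R N)

/-- The homomorphisms `Y* → X` which factor through some projective `R`-module, as a
submodule of `Hom_R(Y*, X)` (realised as the span of the set of such homomorphisms;
this set is already closed under the module operations). -/
noncomputable def factorsThroughProjective (R : Type u) [CommRing R]
    (X Y : Type u) [AddCommGroup X] [Module R X] [AddCommGroup Y] [Module R Y] :
    Submodule R (Module.Dual R Y →ₗ[R] X) :=
  Submodule.span R {f : Module.Dual R Y →ₗ[R] X |
    ∃ (P : ModuleCat.{u} R), Module.Projective R P ∧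
      ∃ (g : Module.Dual R Y →ₗ[R] P) (h : P →ₗ[R] X), f = h.comp g}

noncomputable section AuxLem34
open Limits
open Limits
variable {R : Type u} [CommRing R]
variable {X : Type u} [AddCommGroup X] [Module R X]
  {P : Type u} [AddCommGroup P] [Module R P] [Module.Free R P] [Module.Finite R P]
  (i : Module.Dual R X →ₗ[R] P) (p : P →ₗ[R] X)

namespace Lem34

/-- the chosen projective cover of `X*` -/
abbrev F : ModuleCat.{u} R := Projective.over (ModuleCat.of R (Module.Dual R X))

abbrev π₁ : F (R := R) (X := X) ⟶ ModuleCat.of R (Module.Dual R X) :=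
  Projective.π _

/-- the splice complex `⋯ → F → P → 0` resolving `X` -/
def cplx : ChainComplex (ModuleCat.{u} R) ℕ :=
  ChainComplex.mk' (ModuleCat.of R P) (F (R := R) (X := X))
    (π₁ ≫ ModuleCat.ofHom i)
    (fun f => ⟨_, Projective.d f, (Category.assoc _ _ _).trans ((congrArg (fun g => Projective.π (kernel f) ≫ g) (kernel.condition f)).trans Limits.comp_zero)⟩)

lemma cplx_d_1_0 : (cplx i).d 1 0 = π₁ ≫ ModuleCat.ofHom i := by
  simp [cplx]

lemma cplx_exactAt_succ (n : ℕ) : (cplx i).ExactAt (n + 1) := by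
  rw [HomologicalComplex.exactAt_iff' _ (n + 1 + 1) (n + 1) n (by simp) (by simp)]
  refine (ShortComplex.exact_iff_of_iso ?_).2 (exact_d_f ((cplx i).d (n + 1) n))
  exact ShortComplex.isoMk
    (ChainComplex.mk'XIso (ModuleCat.of R P) (F (R := R) (X := X)) (π₁ ≫ ModuleCat.ofHom i)
      (fun f => ⟨_, Projective.d f, (Category.assoc _ _ _).trans ((congrArg (fun g => Projective.π (kernel f) ≫ g) (kernel.condition f)).trans Limits.comp_zero)⟩) n)
    (Iso.refl _) (Iso.refl _)
    ((Category.comp_id _).trans (ChainComplex.mk'_d _ _ _ _ n)).symm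
    ((Category.id_comp _).trans (Category.comp_id _).symm)

instance cplx_projective (n : ℕ) : Projective ((cplx (R := R) (X := X) (P := P) i).X n) := by
  have : Projective (ModuleCat.of R P) :=
    (IsProjective.iff_projective P).mp inferInstance
  obtain (_ | _ | _ | n) := n
  · exact this
  all_goals apply Projective.projective_over

end Lem34

namespace Lem34
set_option linter.unusedSectionVars false

lemma d_comp_p (hexact : Function.Exact i p) : (cplx i).d 1 0 ≫ ModuleCat.ofHom p = 0 := by
  rw [cplx_d_1_0]
  ext x
  exact (hexact (i ((π₁ : _ ⟶ ModuleCat.of R (Module.Dual R X)) x))).mpr ⟨_, rfl⟩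

def res (hp : Function.Surjective p) (hexact : Function.Exact i p) : ProjectiveResolution (ModuleCat.of R X) where
  complex := cplx i
  π := (ChainComplex.toSingle₀Equiv _ _).symm ⟨ModuleCat.ofHom p, d_comp_p i p hexact⟩
  quasiIso := ⟨fun n => by
    cases n
    · rw [ChainComplex.quasiIsoAt₀_iff, ShortComplex.quasiIso_iff_of_zeros']
      · have hex : (ShortComplex.mk ((cplx i).d 1 0) (ModuleCat.ofHom p)
            (d_comp_p i p hexact)).Exact := by
          rw [ShortComplex.moduleCat_exact_iff]
          intro x hx
          obtain ⟨k, hk⟩ := (hexact x).mp hx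
          obtain ⟨y, hy⟩ := (ModuleCat.epi_iff_surjective
            (π₁ (R := R) (X := X))).1 inferInstance k
          refine ⟨y, (ConcreteCategory.congr_hom (cplx_d_1_0 i) y).trans ?_⟩
          show i (π₁ y) = x
          rw [hy]; exact hk
        have hepi : Epi (ShortComplex.mk ((cplx i).d 1 0) (ModuleCat.ofHom p)
            (d_comp_p i p hexact)).g := by
          rw [ModuleCat.epi_iff_surjective]; exact hp
        refine (ShortComplex.exact_and_epi_g_iff_of_iso ?_).2 ⟨hex, hepi⟩
        exact ShortComplex.isoMk (Iso.refl _) (Iso.refl _) (Iso.refl _)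
          (by exact (Category.id_comp _).trans (Category.comp_id _).symm) (by exact (Category.id_comp _).trans (Category.comp_id _).symm)
      all_goals rfl
    · rw [quasiIsoAt_iff_exactAt']
      · apply cplx_exactAt_succ
      · apply ChainComplex.exactAt_succ_single_obj⟩

end Lem34

namespace Lem34
set_option linter.unusedSectionVars false

variable (W : Type u) [AddCommGroup W] [Module R W]

abbrev Kc : CochainComplex (ModuleCat.{u} R) ℕ :=
  (cplx i).linearYonedaObj R (ModuleCat.of R W)

abbrev S' : ShortComplex (ModuleCat.{u} R) := (Kc i W).sc' 0 1 2

noncomputable def E0 (hp : Function.Surjective p) (hexact : Function.Exact i p) :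
    (ModuleExt1 R X W) ≃ₗ[R]
      (LinearMap.ker (S' i W).g.hom ⧸ LinearMap.range (S' i W).moduleCatToCycles) :=
  (((res i p hp hexact).isoExt 1 (ModuleCat.of R W) :
      (ModuleExt1 R X W) ≅ (Kc i W).homology 1) ≪≫
    ShortComplex.homologyMapIso ((Kc i W).isoSc' 0 1 2 (by simp) (by simp)) ≪≫
    (S' i W).moduleCatHomologyIso).toLinearEquiv

lemma d21_pi (hi : Function.Injective i) : (cplx i).d 2 1 ≫ (π₁ (R := R) (X := X)) = 0 := by
  have hmono : Mono (ModuleCat.ofHom i) := (ModuleCat.mono_iff_injective _).2 hi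
  rw [← cancel_mono (ModuleCat.ofHom i)]
  erw [Category.assoc, ← cplx_d_1_0 i, HomologicalComplex.d_comp_d, Limits.zero_comp]
  rfl

lemma sg_apply (f : ↥((S' i W).X₂)) : (S' i W).g f = (cplx i).d 2 1 ≫ f := rfl

lemma sf_apply (f : ↥((S' i W).X₁)) : (S' i W).f f = (cplx i).d 1 0 ≫ f := rfl

lemma mem_ker_Sg (g : Module.Dual R X →ₗ[R] W) (hi : Function.Injective i) :
    ((π₁ ≫ ModuleCat.ofHom g : (F : ModuleCat R) ⟶ ModuleCat.of R W) :
      ↥((S' i W).X₂)) ∈ LinearMap.ker (S' i W).g.hom := by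
  show (S' i W).g _ = 0
  exact (Category.assoc _ _ _).symm.trans ((congrArg (· ≫ ModuleCat.ofHom g) (d21_pi i hi)).trans Limits.zero_comp)

noncomputable def ψ₀ (hi : Function.Injective i) :
    (Module.Dual R X →ₗ[R] W) →ₗ[R] ↥(LinearMap.ker (S' i W).g.hom) where
  toFun g := ⟨π₁ ≫ ModuleCat.ofHom g, mem_ker_Sg i W g hi⟩
  map_add' g₁ g₂ := by
    apply Subtype.ext
    show π₁ ≫ ModuleCat.ofHom (g₁ + g₂) = π₁ ≫ ModuleCat.ofHom g₁ + π₁ ≫ ModuleCat.ofHom g₂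
    ext x
    rfl
  map_smul' r g := by
    apply Subtype.ext
    show π₁ ≫ ModuleCat.ofHom (r • g) = r • (π₁ ≫ ModuleCat.ofHom g)
    ext x
    rfl

lemma π₁_surj : Function.Surjective (π₁ (R := R) (X := X)) :=
  (ModuleCat.epi_iff_surjective (π₁ (R := R) (X := X))).1 inferInstance

lemma ψ₀_inj (hi : Function.Injective i) : Function.Injective (ψ₀ i W hi) := by
  intro g₁ g₂ h
  have h' : π₁ ≫ ModuleCat.ofHom g₁ = π₁ ≫ ModuleCat.ofHom g₂ := congrArg Subtype.val h
  ext k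
  obtain ⟨y, hy⟩ := π₁_surj (R := R) (X := X) k
  have hk := ConcreteCategory.congr_hom h' y
  show g₁ k = g₂ k
  rw [← hy]
  exact hk

lemma ψ₀_surj (hi : Function.Injective i) (hp : Function.Surjective p)
    (hexact : Function.Exact i p) : Function.Surjective (ψ₀ i W hi) := by
  rintro ⟨f, hf⟩
  let f' : (cplx i).X 1 ⟶ ModuleCat.of R W := f
  have hf' : (cplx i).d 2 1 ≫ f' = 0 := hf
  -- exactness of the resolution at degree 1
  have hex := (res i p hp hexact).exact_succ 0
  have hrk := hex.moduleCat_range_eq_ker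
  -- `ker π₁ ≤ ker f`
  have hle : LinearMap.ker ((π₁ (R := R) (X := X)).hom : ↥(F (R := R) (X := X)) →ₗ[R] Module.Dual R X)
      ≤ LinearMap.ker (f'.hom : ↥(F (R := R) (X := X)) →ₗ[R] W) := by
    intro x hx
    have hx0 : ((res i p hp hexact).complex.d 1 0) x = 0 := by
      have : ((cplx i).d 1 0) x = i (π₁ x) := ConcreteCategory.congr_hom (cplx_d_1_0 i) x
      show ((cplx i).d 1 0) x = 0
      rw [this]; exact (congrArg i (LinearMap.mem_ker.mp hx)).trans (map_zero i)
    have : x ∈ LinearMap.ker ((res i p hp hexact).complex.d 1 0).hom := hx0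
    rw [← hrk] at this
    obtain ⟨y, hy⟩ := this
    have hyx : ((cplx i).d 2 1) y = x := hy
    show f' x = 0
    have h2 : f' (((cplx i).d 2 1) y) = 0 := ConcreteCategory.congr_hom hf' y
    rw [← hyx]
    exact h2
  let π₁' : ↥(F (R := R) (X := X)) →ₗ[R] Module.Dual R X := π₁.hom
  let e := π₁'.quotKerEquivOfSurjective (π₁_surj (R := R) (X := X))
  refine ⟨(Submodule.liftQ (LinearMap.ker π₁') (f'.hom : ↥(F (R := R) (X := X)) →ₗ[R] W) hle).comp
    (e.symm : Module.Dual R X →ₗ[R] _), ?_⟩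
  apply Subtype.ext
  show π₁ ≫ ModuleCat.ofHom _ = f'
  ext x
  show (Submodule.liftQ _ _ hle) (e.symm (π₁' x)) = f' x
  have hx : e.symm (π₁' x) = Submodule.Quotient.mk x := by
    apply e.injective
    rw [LinearEquiv.apply_symm_apply]
    rfl
  rw [hx]
  rfl

noncomputable def ψ (hi : Function.Injective i) (hp : Function.Surjective p)
    (hexact : Function.Exact i p) :
    (Module.Dual R X →ₗ[R] W) ≃ₗ[R] ↥(LinearMap.ker (S' i W).g.hom) :=
  LinearEquiv.ofBijective (ψ₀ i W hi) ⟨ψ₀_inj i W hi, ψ₀_surj i p W hi hp hexact⟩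

lemma hmap (hi : Function.Injective i) (hp : Function.Surjective p)
    (hexact : Function.Exact i p) :
    Submodule.map (ψ i p W hi hp hexact).toLinearMap (LinearMap.range (LinearMap.lcomp R W i)) =
      LinearMap.range (S' i W).moduleCatToCycles := by
  apply le_antisymm
  · rintro _ ⟨_, ⟨f₀, rfl⟩, rfl⟩
    refine ⟨(ModuleCat.ofHom f₀ : ModuleCat.of R P ⟶ ModuleCat.of R W), ?_⟩
    apply Subtype.ext
    show (cplx i).d 1 0 ≫ ModuleCat.ofHom f₀ = π₁ ≫ ModuleCat.ofHom (LinearMap.lcomp R W i f₀)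
    rw [cplx_d_1_0]
    rfl
  · rintro _ ⟨f₀, rfl⟩
    refine ⟨LinearMap.lcomp R W i (f₀ : ModuleCat.of R P ⟶ ModuleCat.of R W).hom, ⟨(f₀ : ModuleCat.of R P ⟶ ModuleCat.of R W).hom, rfl⟩, ?_⟩
    apply Subtype.ext
    show π₁ ≫ ModuleCat.ofHom (LinearMap.lcomp R W i (f₀ : ModuleCat.of R P ⟶ ModuleCat.of R W).hom) =
      (cplx i).d 1 0 ≫ f₀
    rw [cplx_d_1_0]
    rfl

/-- Step A: `Ext¹(X, W) ≃ Hom(X*, W) / {g ∘ i}`. -/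
noncomputable def stepA (hi : Function.Injective i) (hp : Function.Surjective p)
    (hexact : Function.Exact i p) :
    (ModuleExt1 R X W) ≃ₗ[R]
      ((Module.Dual R X →ₗ[R] W) ⧸ LinearMap.range (LinearMap.lcomp R W i)) :=
  (E0 i p W hp hexact).trans
    (Submodule.Quotient.equiv _ _ (ψ i p W hi hp hexact) (hmap i p W hi hp hexact)).symm

end Lem34

section StepBC
set_option linter.unusedSectionVars false
variable {R : Type u} [CommRing R]
variable {X : Type u} [AddCommGroup X] [Module R X] [Module.IsReflexive R X]
  {P : Type u} [AddCommGroup P] [Module R P] [Module.Free R P] [Module.Finite R P]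
  (i : Module.Dual R X →ₗ[R] P) (p : P →ₗ[R] X)
  (Y : Type u) [AddCommGroup Y] [Module R Y] [Module.IsReflexive R Y]

open Module

/-- Step B : `i.dualMap : P* → X**` is surjective. -/
lemma stepB (hi : Function.Injective i) (hp : Function.Surjective p)
    (hexact : Function.Exact i p) (hX : Subsingleton (ModuleExt1 R X R)) :
    Function.Surjective (i.dualMap) := by
  have e := Lem34.stepA i p R hi hp hexact
  haveI : Subsingleton ((Module.Dual R X →ₗ[R] R) ⧸
      LinearMap.range (LinearMap.lcomp R R i)) :=
    Equiv.subsingleton e.symm.toEquiv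
  intro g
  have h0 : (Submodule.Quotient.mk g : (Module.Dual R X →ₗ[R] R) ⧸
      LinearMap.range (LinearMap.lcomp R R i)) = 0 := Subsingleton.elim _ _
  rw [Submodule.Quotient.mk_eq_zero] at h0
  obtain ⟨f₀, hf₀⟩ := h0
  exact ⟨f₀, hf₀⟩

/-- The duality swap `Hom(X*, Y) ≃ Hom(Y*, X)`. -/
noncomputable def flipE : (Module.Dual R X →ₗ[R] (Module.Dual R Y →ₗ[R] R)) ≃ₗ[R]
    (Module.Dual R Y →ₗ[R] (Module.Dual R X →ₗ[R] R)) :=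
  LinearEquiv.ofLinear LinearMap.lflip.toLinearMap LinearMap.lflip.toLinearMap rfl rfl

noncomputable def e2 : (Module.Dual R X →ₗ[R] Y) ≃ₗ[R] (Module.Dual R Y →ₗ[R] X) :=
  (LinearEquiv.congrRight (Module.evalEquiv R Y)).trans
    ((flipE (R := R) (X := X) Y).trans
      (LinearEquiv.congrRight (Module.evalEquiv R X).symm))

lemma e2_apply (g : Module.Dual R X →ₗ[R] Y) (y : Module.Dual R Y) :
    e2 Y g y = (Module.evalEquiv R X).symm
      ((Module.evalEquiv R Y).toLinearMap.comp g |>.flip y) := rfl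

end StepBC

section StepC
set_option linter.unusedSectionVars false
variable {R : Type u} [CommRing R]
variable {X : Type u} [AddCommGroup X] [Module R X] [Module.IsReflexive R X]
  {P : Type u} [AddCommGroup P] [Module R P] [Module.Free R P] [Module.Finite R P]
  (i : Module.Dual R X →ₗ[R] P) (p : P →ₗ[R] X)
  (Y : Type u) [AddCommGroup Y] [Module R Y] [Module.IsReflexive R Y]

open Module

/-- The surjection `P* → X`. -/
noncomputable def πt : Module.Dual R P →ₗ[R] X :=
  ((Module.evalEquiv R X).symm.toLinearMap).comp i.dualMap

lemma πt_surj (hi : Function.Injective i) (hp : Function.Surjective p)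
    (hexact : Function.Exact i p) (hX : Subsingleton (ModuleExt1 R X R)) :
    Function.Surjective (πt (R := R) (X := X) (P := P) i) :=
  (Module.evalEquiv R X).symm.surjective.comp (stepB i p hi hp hexact hX)

lemma hmapC (hi : Function.Injective i) (hp : Function.Surjective p)
    (hexact : Function.Exact i p) (hX : Subsingleton (ModuleExt1 R X R)) :
    Submodule.map (e2 (R := R) (X := X) Y).toLinearMap (LinearMap.range (LinearMap.lcomp R Y i)) =
      factorsThroughProjective R X Y := by
  apply le_antisymm
  · rintro _ ⟨_, ⟨f₀, rfl⟩, rfl⟩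
    apply Submodule.subset_span
    refine ⟨ModuleCat.of R (Module.Dual R P),
      (inferInstance : Module.Projective R (Module.Dual R P)), f₀.dualMap, πt i, ?_⟩
    ext y
    rfl
  · rw [factorsThroughProjective, Submodule.span_le]
    rintro _ ⟨Q, hQ, g, h, rfl⟩
    obtain ⟨k, hk⟩ := Module.projective_lifting_property (h := hQ) (πt i) h
      (πt_surj i p hi hp hexact hX)
    set u : Module.Dual R Y →ₗ[R] Module.Dual R P := k.comp g with hu
    set f₀ : P →ₗ[R] Y :=
      ((Module.evalEquiv R Y).symm.toLinearMap).comp (u.dualMap.comp (Module.Dual.eval R P))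
      with hf₀
    refine ⟨LinearMap.lcomp R Y i f₀, ⟨f₀, rfl⟩, ?_⟩
    ext y
    show (Module.evalEquiv R X).symm
      (((Module.evalEquiv R Y).toLinearMap.comp (f₀.comp i)).flip y) = h (g y)
    rw [← hk]
    show _ = (Module.evalEquiv R X).symm (i.dualMap (u y))
    congr 1
    ext x
    show (Module.evalEquiv R Y) (f₀ (i x)) y = (u y) (i x)
    rw [hf₀]
    show (Module.evalEquiv R Y) ((Module.evalEquiv R Y).symm
      (u.dualMap (Module.Dual.eval R P (i x)))) y = (u y) (i x)
    rw [LinearEquiv.apply_symm_apply]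
    rfl
end StepC

end AuxLem34

/-- The key isomorphism in the proof of **Lemma 3.4**: if `R` is a commutative noetherian
ring, `X` a finitely generated reflexive `R`-module with `Ext¹_R(X, R) = 0` whose first
syzygy is `X*` (i.e. there is a short exact sequence `0 → X* → P → X → 0` with `P` finitely
generated free), and `Y` any finitely generated reflexive `R`-module, then
`Ext¹_R(X, Y) ≅ \underline{Hom}_R(Y*, X)`, the quotient of `Hom_R(Y*, X)` by the submodule
of homomorphisms factoring through a projective module. -/

theorem ext_one_iso_stable_hom
    (R : Type u) [CommRing R] [IsNoetherianRing R]
    (X : Type u) [AddCommGroup X] [Module R X] [Module.Finite R X] [Module.IsReflexive R X]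
    (hX : Subsingleton (ModuleExt1 R X R))
    (P : Type u) [AddCommGroup P] [Module R P] [Module.Free R P] [Module.Finite R P]
    (i : Module.Dual R X →ₗ[R] P) (p : P →ₗ[R] X)
    (hi : Function.Injective i) (hp : Function.Surjective p)
    (hexact : Function.Exact i p)
    (Y : Type u) [AddCommGroup Y] [Module R Y] [Module.Finite R Y]
    [Module.IsReflexive R Y] :
    Nonempty ((ModuleExt1 R X Y) ≃ₗ[R]
      ((Module.Dual R Y →ₗ[R] X) ⧸ factorsThroughProjective R X Y)) := by
  exact ⟨(Lem34.stepA i p Y hi hp hexact).trans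
    (Submodule.Quotient.equiv _ _ (e2 (R := R) (X := X) Y)
      (hmapC i p Y hi hp hexact hX))⟩
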